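/- A nonzero B_n-submodule W of V is indecomposable if and only if W is contained in V_k for some 0 ≤ k ≤ n. -/

import Mathlib

open Finset

/-- `f : Fin n → Option (Fin n)` represents an injective partial map of `{1,…,n}`
(elements 0-indexed): `f a = some x` means `a ∈ D(f)` with image `x`. Injectivity: -/
def IsPartialInj {n : ℕ} (f : Fin n → Option (Fin n)) : Prop :=
  ∀ a b x, f a = some x → f b = some x → a = b

/-- order preserving: `a < b` in the domain implies `f a < f b`. -/
def IsOrderPres {n : ℕ} (f : Fin n → Option (Fin n)) : Prop :=
  ∀ a b x y, a < b → f a = some x → f b = some y → x < y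

/-- order decreasing: `f a ≤ a` on the domain. -/
def IsOrderDec {n : ℕ} (f : Fin n → Option (Fin n)) : Prop :=
  ∀ a x, f a = some x → x ≤ a

/-- The planar upper triangular rook monoid `B_n`: order-preserving,
order-decreasing injective partial maps of `{1,…,n}`. -/
def Bn (n : ℕ) : Set (Fin n → Option (Fin n)) :=
  {f | IsPartialInj f ∧ IsOrderPres f ∧ IsOrderDec f}

/-- domain of the partial map. -/
def domf {n : ℕ} (f : Fin n → Option (Fin n)) : Finset (Fin n) :=
  Finset.univ.filter (fun a => (f a).isSome)

/-- image of a finite set under the partial map. -/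
def fimg {n : ℕ} (f : Fin n → Option (Fin n)) (S : Finset (Fin n)) : Finset (Fin n) :=
  S.biUnion (fun a => (f a).toFinset)

/-- the linear action of a partial map `f` on `V = ⊕_{S ⊆ n} F·v_S`:
`f · v_S = v_{f(S)}` if `S ⊆ D(f)`, and `0` otherwise. -/
noncomputable def actMap (F : Type*) [Field F] {n : ℕ} (f : Fin n → Option (Fin n)) :
    (Finset (Fin n) →₀ F) →ₗ[F] (Finset (Fin n) →₀ F) :=
  Finsupp.lsum F (fun S => if S ⊆ domf f then Finsupp.lsingle (fimg f S) else 0)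

/-- a subspace `W` of `V` is a `B_n`-submodule if it is invariant under the action. -/
def IsBnSub {n : ℕ} {F : Type*} [Field F] (W : Submodule F (Finset (Fin n) →₀ F)) : Prop :=
  ∀ f ∈ Bn n, ∀ v ∈ W, actMap F f v ∈ W

/-- the `B_n`-submodule of `V` generated by a vector `v`. -/
noncomputable def genMod (F : Type*) [Field F] {n : ℕ} (v : Finset (Fin n) →₀ F) :
    Submodule F (Finset (Fin n) →₀ F) :=
  sInf {W | IsBnSub W ∧ v ∈ W}

/-- `V_k`, the span of the `v_S` with `|S| = k`. -/
noncomputable def VK (F : Type*) [Field F] (n k : ℕ) : Submodule F (Finset (Fin n) →₀ F) :=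
  Submodule.span F {w | ∃ S : Finset (Fin n), S.card = k ∧ w = Finsupp.single S (1 : F)}

/-- the subset `{1, …, k}` of `{1, …, n}` (0-indexed: the `k` smallest elements). -/
def boldK (n k : ℕ) : Finset (Fin n) := Finset.univ.filter (fun a => a.val < k)

/-! ### auxiliary lemmas -/

section Aux

variable {n : ℕ} {F : Type*} [Field F]

lemma mem_domf {f : Fin n → Option (Fin n)} {a : Fin n} : a ∈ domf f ↔ (f a).isSome := by
  simp [domf]

lemma actMap_apply (f : Fin n → Option (Fin n)) (v : Finset (Fin n) →₀ F) :
    actMap F f v =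
      v.sum (fun T c => if T ⊆ domf f then Finsupp.single (fimg f T) c else 0) := by
  rw [actMap, Finsupp.lsum_apply]
  refine Finsupp.sum_congr (fun T _ => ?_)
  split_ifs with h <;> simp

lemma actMap_single (f : Fin n → Option (Fin n)) (T : Finset (Fin n)) (c : F) :
    actMap F f (Finsupp.single T c) =
      if T ⊆ domf f then Finsupp.single (fimg f T) c else 0 := by
  rw [actMap, Finsupp.lsum_single]
  split_ifs with h <;> simp

lemma actMap_support {f : Fin n → Option (Fin n)} {v : Finset (Fin n) →₀ F}
    {S : Finset (Fin n)} (hS : S ∈ (actMap F f v).support) :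
    ∃ T ∈ v.support, T ⊆ domf f ∧ S = fimg f T := by
  rw [actMap_apply] at hS
  have h := Finsupp.support_sum hS
  obtain ⟨T, hT, hmem⟩ := Finset.mem_biUnion.mp h
  refine ⟨T, hT, ?_⟩
  by_cases hd : T ⊆ domf f
  · refine ⟨hd, ?_⟩
    rw [if_pos hd] at hmem
    have := Finsupp.support_single_subset hmem
    simpa using this
  · rw [if_neg hd] at hmem; simp at hmem

lemma card_fimg {f : Fin n → Option (Fin n)} (hf : IsPartialInj f)
    {T : Finset (Fin n)} (hT : T ⊆ domf f) : (fimg f T).card = T.card := by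
  rw [fimg, Finset.card_biUnion]
  · rw [Finset.sum_congr rfl (fun a ha => ?_), Finset.sum_const, smul_eq_mul, mul_one]
    obtain ⟨x, hx⟩ := Option.isSome_iff_exists.mp (mem_domf.mp (hT ha))
    rw [hx]; rfl
  · intro a ha b hb hab
    simp only [Finset.disjoint_left]
    intro x hxa hxb
    rw [Option.mem_toFinset, Option.mem_def] at hxa hxb
    exact hab (hf a b x hxa hxb)

/-- The submodule of vectors whose support consists of sets whose cardinality satisfies `p`. -/
def grSub (n : ℕ) (F : Type*) [Field F] (p : ℕ → Prop) :
    Submodule F (Finset (Fin n) →₀ F) where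
  carrier := {v | ∀ S ∈ v.support, p S.card}
  add_mem' := by
    classical
    intro a b ha hb S hS
    rcases Finset.mem_union.mp (Finsupp.support_add hS) with h | h
    exacts [ha S h, hb S h]
  zero_mem' := by simp
  smul_mem' := by
    intro c v hv S hS
    exact hv S (Finsupp.support_smul hS)

lemma mem_grSub {p : ℕ → Prop} {v : Finset (Fin n) →₀ F} :
    v ∈ grSub n F p ↔ ∀ S ∈ v.support, p S.card := Iff.rfl

lemma grSub_invariant {p : ℕ → Prop} {f : Fin n → Option (Fin n)} (hf : IsPartialInj f)
    {v : Finset (Fin n) →₀ F} (hv : v ∈ grSub n F p) : actMap F f v ∈ grSub n F p := by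
  intro S hS
  obtain ⟨T, hT, hTd, rfl⟩ := actMap_support hS
  rw [card_fimg hf hTd]
  exact hv T hT

lemma VK_le_grSub (k : ℕ) : VK F n k ≤ grSub n F (· = k) := by
  rw [VK, Submodule.span_le]
  rintro w ⟨S, hS, rfl⟩ T hT
  have h := Finsupp.support_single_subset hT
  simp only [Finset.mem_singleton] at h
  subst h; exact hS

lemma grSub_le_VK (k : ℕ) : grSub n F (· = k) ≤ VK F n k := by
  intro v hv
  rw [← Finsupp.sum_single v, Finsupp.sum]
  refine Submodule.sum_mem _ (fun S hS => ?_)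
  have : Finsupp.single S (v S) = (v S) • Finsupp.single S (1 : F) := by
    rw [Finsupp.smul_single', mul_one]
  rw [this]
  exact Submodule.smul_mem _ _ (Submodule.subset_span ⟨S, hv S hS, rfl⟩)

end Aux

section Grading

variable {n : ℕ} {F : Type*} [Field F]

/-- the partial identity omitting `a`. -/
def eA {n : ℕ} (a : Fin n) : Fin n → Option (Fin n) :=
  fun x => if x = a then none else some x

lemma eA_mem (a : Fin n) : eA a ∈ Bn n := by
  refine ⟨?_, ?_, ?_⟩
  · intro x y z hx hy
    unfold eA at hx hy
    split_ifs at hx hy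
    rw [Option.some_inj] at hx hy
    rw [hx, hy]
  · intro x y z w hxy hx hy
    unfold eA at hx hy
    split_ifs at hx hy
    rw [Option.some_inj] at hx hy
    rw [← hx, ← hy]; exact hxy
  · intro x z hx
    unfold eA at hx
    split_ifs at hx
    rw [Option.some_inj] at hx
    rw [← hx]

lemma subset_domf_eA {a : Fin n} {T : Finset (Fin n)} :
    T ⊆ domf (eA a) ↔ a ∉ T := by
  constructor
  · intro h ha
    have := mem_domf.mp (h ha)
    simp [eA] at this
  · intro h x hx
    rw [mem_domf, eA]
    have : x ≠ a := fun he => h (he ▸ hx)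
    rw [if_neg this]
    rfl

lemma fimg_eA {a : Fin n} {T : Finset (Fin n)} (h : a ∉ T) : fimg (eA a) T = T := by
  ext x
  simp only [fimg, Finset.mem_biUnion, Option.mem_toFinset, Option.mem_def]
  constructor
  · rintro ⟨b, hb, hbx⟩
    rw [eA, if_neg (show b ≠ a from fun he => h (he ▸ hb)), Option.some_inj] at hbx
    rwa [← hbx]
  · intro hx
    refine ⟨x, hx, ?_⟩
    rw [eA, if_neg (show x ≠ a from fun he => h (he ▸ hx))]

lemma actMap_eA (a : Fin n) (v : Finset (Fin n) →₀ F) :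
    actMap F (eA a) v = v.filter (fun T => a ∉ T) := by
  induction v using Finsupp.induction_linear with
  | zero => simp [Finsupp.filter_zero]
  | add f g hf hg => rw [map_add, hf, hg, Finsupp.filter_add]
  | single T c =>
    rw [actMap_single]
    by_cases h : a ∈ T
    · rw [if_neg (fun hs => (subset_domf_eA.mp hs) h), Finsupp.filter_single_of_neg]
      simpa using h
    · rw [if_pos (subset_domf_eA.mpr h), fimg_eA h, Finsupp.filter_single_of_pos]
      simpa using h

lemma N_apply (v : Finset (Fin n) →₀ F) (S : Finset (Fin n)) :
    (∑ a : Fin n, actMap F (eA a) v) S = ((n - S.card : ℕ) : F) * v S := by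
  rw [Finsupp.finset_sum_apply]
  have : ∀ a : Fin n, (actMap F (eA a) v) S = if a ∉ S then v S else 0 := by
    intro a
    rw [actMap_eA, Finsupp.filter_apply]
  rw [Finset.sum_congr rfl (fun a _ => this a), Finset.sum_ite, Finset.sum_const,
    Finset.sum_const_zero, add_zero, nsmul_eq_mul]
  congr 2
  have : Finset.univ.filter (fun a => a ∉ S) = Sᶜ := by
    ext x; simp
  rw [this, Finset.card_compl, Fintype.card_fin]

end Grading

section Comp

variable {n : ℕ} {F : Type*} [Field F]

/-- the degree-`k` component. -/
noncomputable def comp (k : ℕ) (v : Finset (Fin n) →₀ F) : Finset (Fin n) →₀ F :=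
  v.filter (fun S => S.card = k)

lemma comp_apply (k : ℕ) (v : Finset (Fin n) →₀ F) (S : Finset (Fin n)) :
    comp k v S = if S.card = k then v S else 0 := rfl

lemma comp_mem_grSub (k : ℕ) (v : Finset (Fin n) →₀ F) (p : ℕ → Prop) (hp : p k) :
    comp k v ∈ grSub n F p := by
  intro S hS
  have := Finsupp.mem_support_iff.mp hS
  rw [comp_apply] at this
  by_cases h : S.card = k
  · rw [h]; exact hp
  · exact absurd (if_neg h) this

lemma sub_comp_mem_grSub (k : ℕ) (v : Finset (Fin n) →₀ F) (p : ℕ → Prop)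
    (hp : ∀ j, j ≠ k → p j) : v - comp k v ∈ grSub n F p := by
  intro S hS
  have h := Finsupp.mem_support_iff.mp hS
  rw [Finsupp.sub_apply, comp_apply] at h
  by_cases hc : S.card = k
  · rw [if_pos hc, sub_self] at h; exact absurd rfl h
  · exact hp _ hc

variable [CharZero F]

lemma comp_mem {W : Submodule F (Finset (Fin n) →₀ F)} (hW : IsBnSub W) :
    ∀ (m : ℕ) (v : Finset (Fin n) →₀ F), v ∈ W →
      (v.support.image Finset.card).card ≤ m → ∀ k, comp k v ∈ W := by
  intro m
  induction m with
  | zero =>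
    intro v hv hc k
    rw [Nat.le_zero, Finset.card_eq_zero, Finset.image_eq_empty, Finsupp.support_eq_empty] at hc
    subst hc
    have h : comp k (0 : Finset (Fin n) →₀ F) = 0 := Finsupp.filter_zero _
    rw [h]; exact W.zero_mem
  | succ m ih =>
    intro v hv hc k
    by_cases h0 : v = 0
    · subst h0
      have h : comp k (0 : Finset (Fin n) →₀ F) = 0 := Finsupp.filter_zero _
      rw [h]; exact W.zero_mem
    obtain ⟨S0, hS0⟩ := Finsupp.support_nonempty_iff.mpr h0
    set k0 : ℕ := S0.card with hk0
    have hk0n : k0 ≤ n := le_trans (Finset.card_le_univ S0) (by simp)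
    set c : F := ((n - k0 : ℕ) : F) with hcdef
    set w : Finset (Fin n) →₀ F := (∑ a : Fin n, actMap F (eA a) v) - c • v with hwdef
    have hwW : w ∈ W := by
      refine W.sub_mem (Submodule.sum_mem _ (fun a _ => hW (eA a) (eA_mem a) v hv))
        (W.smul_mem _ hv)
    have hwS : ∀ S : Finset (Fin n), w S = (((n - S.card : ℕ) : F) - c) * v S := by
      intro S
      rw [hwdef, Finsupp.sub_apply, Finsupp.smul_apply, N_apply, smul_eq_mul, sub_mul]
    have hwsupp : (w.support.image Finset.card).card ≤ m := by
      have hsub : w.support.image Finset.card ⊆ (v.support.image Finset.card).erase k0 := by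
        intro j hj
        obtain ⟨S, hS, rfl⟩ := Finset.mem_image.mp hj
        have hw0 := Finsupp.mem_support_iff.mp hS
        rw [hwS] at hw0
        have hv0 : v S ≠ 0 := by intro h; exact hw0 (by rw [h, mul_zero])
        have hne : S.card ≠ k0 := by
          intro h
          rw [h] at hw0
          exact hw0 (by rw [sub_self, zero_mul])
        exact Finset.mem_erase.mpr ⟨hne, Finset.mem_image_of_mem _
          (Finsupp.mem_support_iff.mpr hv0)⟩
      have hk0mem : k0 ∈ v.support.image Finset.card := Finset.mem_image_of_mem _ hS0
      calc (w.support.image Finset.card).card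
          ≤ ((v.support.image Finset.card).erase k0).card := Finset.card_le_card hsub
        _ = (v.support.image Finset.card).card - 1 := Finset.card_erase_of_mem hk0mem
        _ ≤ m := by omega
    have ihw : ∀ j, comp j w ∈ W := fun j => ih w hwW hwsupp j
    have hscaled : ∀ j, j ≤ n → j ≠ k0 → comp j v ∈ W := by
      intro j hjn hjk0
      set d : F := (k0 : F) - (j : F) with hddef
      have hd0 : d ≠ 0 := by
        rw [hddef, sub_ne_zero]
        intro h
        exact hjk0 (Nat.cast_injective h).symm
      have hcompw : comp j w = d • comp j v := by
        ext S
        rw [Finsupp.smul_apply, comp_apply, comp_apply, smul_eq_mul]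
        by_cases hSj : S.card = j
        · rw [if_pos hSj, if_pos hSj, hwS, hSj]
          congr 1
          rw [hcdef, Nat.cast_sub hjn, Nat.cast_sub hk0n, hddef]
          ring
        · rw [if_neg hSj, if_neg hSj, mul_zero]
      have : comp j v = d⁻¹ • comp j w := by
        rw [hcompw, smul_smul, inv_mul_cancel₀ hd0, one_smul]
      rw [this]
      exact W.smul_mem _ (ihw j)
    by_cases hkn : n < k
    · have : comp k v = 0 := by
        ext S
        rw [comp_apply]
        have : S.card ≤ n := le_trans (Finset.card_le_univ S) (by simp)
        rw [if_neg (by omega)]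
        rfl
      rw [this]; exact W.zero_mem
    push_neg at hkn
    by_cases hkk0 : k = k0
    · -- k = k0 : write comp k0 v = v - ∑ other components
      set K : Finset ℕ := v.support.image Finset.card with hK
      have hkmem : k ∈ K := by
        rw [hkk0, hk0]; exact Finset.mem_image_of_mem _ hS0
      have hsum : v = ∑ j ∈ K, comp j v := by
        ext S
        rw [Finsupp.finset_sum_apply]
        rw [Finset.sum_congr rfl (fun j _ => comp_apply j v S)]
        rw [Finset.sum_ite_eq K S.card (fun _ => v S)]
        by_cases hmem : S.card ∈ K
        · rw [if_pos hmem]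
        · rw [if_neg hmem]
          symm
          by_contra hne
          exact hmem (Finset.mem_image_of_mem _ (Finsupp.mem_support_iff.mpr
            (fun h => hne h.symm)))
      have hrest : ∀ j ∈ K.erase k, comp j v ∈ W := by
        intro j hj
        obtain ⟨hjne, hjK⟩ := Finset.mem_erase.mp hj
        obtain ⟨S, _, rfl⟩ := Finset.mem_image.mp hjK
        exact hscaled _ (le_trans (Finset.card_le_univ S) (by simp)) (hkk0 ▸ hjne)
      have heq : comp k v + ∑ j ∈ K.erase k, comp j v = v := by
        rw [Finset.add_sum_erase K (fun j => comp j v) hkmem]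
        exact hsum.symm
      rw [eq_sub_of_add_eq heq]
      exact W.sub_mem hv (Submodule.sum_mem _ hrest)
    · exact hscaled k hkn hkk0
  
end Comp

section Std

variable {n : ℕ} {F : Type*} [Field F]

lemma card_le_n (S : Finset (Fin n)) : S.card ≤ n :=
  le_trans (Finset.card_le_univ S) (by simp)

/-- the element of `Bn` with domain `S` pushing `S` down to `{0, …, |S|-1}`. -/
noncomputable def stdMap (S : Finset (Fin n)) : Fin n → Option (Fin n) :=
  fun a => if h : a ∈ S then
    some (Fin.castLE (card_le_n S) ((S.orderIsoOfFin rfl).symm ⟨a, h⟩)) else none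

lemma strictMono_le_nat {k : ℕ} {g : Fin k → ℕ} (hg : StrictMono g) (j : Fin k) :
    (j : ℕ) ≤ g j := by
  obtain ⟨m, hm⟩ := j
  induction m with
  | zero => simp
  | succ m ihm =>
    have hm' : m < k := Nat.lt_of_succ_lt hm
    have h1 := hg (show (⟨m, hm'⟩ : Fin k) < ⟨m + 1, hm⟩ by simp [Fin.lt_def])
    have h2 := ihm hm'
    simp only at h1 h2 ⊢
    omega

lemma stdMap_mem (S : Finset (Fin n)) : stdMap S ∈ Bn n := by
  refine ⟨?_, ?_, ?_⟩
  · intro a b x ha hb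
    unfold stdMap at ha hb
    split_ifs at ha hb with h1 h2
    rw [Option.some_inj] at ha hb
    have : ((S.orderIsoOfFin rfl).symm ⟨a, h1⟩) = ((S.orderIsoOfFin rfl).symm ⟨b, h2⟩) := by
      have := ha.trans hb.symm
      exact Fin.castLE_injective _ this
    have := (S.orderIsoOfFin rfl).symm.injective this
    exact congrArg Subtype.val this
  · intro a b x y hab ha hb
    unfold stdMap at ha hb
    split_ifs at ha hb with h1 h2
    rw [Option.some_inj] at ha hb
    rw [← ha, ← hb]
    have hlt : (⟨a, h1⟩ : S) < ⟨b, h2⟩ := by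
      rw [Subtype.mk_lt_mk]; exact hab
    have hsm := (S.orderIsoOfFin rfl).symm.strictMono hlt
    rw [Fin.lt_def, Fin.coe_castLE, Fin.coe_castLE]
    exact hsm
  · intro a x ha
    unfold stdMap at ha
    split_ifs at ha with h1
    rw [Option.some_inj] at ha
    rw [← ha]
    -- need : castLE (symm ⟨a, h1⟩) ≤ a
    set j := (S.orderIsoOfFin rfl).symm ⟨a, h1⟩ with hj
    have hgj : ((S.orderIsoOfFin rfl) j : Fin n) = a := by
      rw [hj, OrderIso.apply_symm_apply]
    have hmono : StrictMono (fun i : Fin S.card => (((S.orderIsoOfFin rfl) i : Fin n) : ℕ)) := by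
      intro i₁ i₂ hi
      have := (S.orderIsoOfFin rfl).strictMono hi
      exact this
    have h1 := strictMono_le_nat hmono j
    have h2 : ((((S.orderIsoOfFin rfl) j : Fin n)) : ℕ) = (a : ℕ) := congrArg Fin.val hgj
    rw [Fin.le_def, Fin.coe_castLE]
    omega

lemma domf_stdMap (S : Finset (Fin n)) : domf (stdMap S) = S := by
  ext a
  rw [mem_domf, stdMap]
  by_cases h : a ∈ S
  · simp [h]
  · simp [h]

lemma fimg_stdMap (S : Finset (Fin n)) : fimg (stdMap S) S = boldK n S.card := by
  ext x
  simp only [fimg, Finset.mem_biUnion, Option.mem_toFinset, Option.mem_def, boldK,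
    Finset.mem_filter, Finset.mem_univ, true_and]
  constructor
  · rintro ⟨a, ha, hax⟩
    rw [stdMap, dif_pos ha, Option.some_inj] at hax
    rw [← hax]
    exact ((S.orderIsoOfFin rfl).symm ⟨a, ha⟩).isLt
  · intro hx
    set j : Fin S.card := ⟨x.val, hx⟩ with hjdef
    set b : Fin n := ((S.orderIsoOfFin rfl) j : Fin n) with hbdef
    have hbS : b ∈ S := ((S.orderIsoOfFin rfl) j).2
    refine ⟨b, hbS, ?_⟩
    rw [stdMap, dif_pos hbS, Option.some_inj]
    have hsub : (⟨b, hbS⟩ : S) = (S.orderIsoOfFin rfl) j := Subtype.ext rfl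
    rw [hsub, OrderIso.symm_apply_apply]
    apply Fin.ext
    simp [hjdef]

/-- any nonzero homogeneous element of a `Bn`-submodule generates `v_{boldK}`. -/
lemma single_boldK_mem {A : Submodule F (Finset (Fin n) →₀ F)} (hA : IsBnSub A)
    {a : Finset (Fin n) →₀ F} (haA : a ∈ A) (ha0 : a ≠ 0) {k : ℕ}
    (hk : ∀ S ∈ a.support, S.card = k) :
    Finsupp.single (boldK n k) (1 : F) ∈ A := by
  obtain ⟨S, hS⟩ := Finsupp.support_nonempty_iff.mpr ha0
  have hact := hA (stdMap S) (stdMap_mem S) a haA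
  have heq : actMap F (stdMap S) a = Finsupp.single (boldK n k) (a S) := by
    rw [actMap_apply, Finsupp.sum]
    rw [Finset.sum_eq_single_of_mem S hS]
    · rw [if_pos (by rw [domf_stdMap])]
      rw [fimg_stdMap, hk S hS]
    · intro T hT hTS
      rw [if_neg]
      rw [domf_stdMap]
      intro hsub
      exact hTS (Finset.eq_of_subset_of_card_le hsub
        (by rw [hk T hT, hk S hS]))
  rw [heq] at hact
  have haS : a S ≠ 0 := Finsupp.mem_support_iff.mp hS
  have := A.smul_mem (a S)⁻¹ hact
  rwa [Finsupp.smul_single', inv_mul_cancel₀ haS] at this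

end Std

/-- a nonzero `B_n`-submodule `W` of `V` is indecomposable iff `W ≤ V_k` for some `k ≤ n`. -/
theorem indecomposable_iff (n : ℕ) (F : Type*) [Field F] [CharZero F]
    (W : Submodule F (Finset (Fin n) →₀ F)) (hW : IsBnSub W) (hW0 : W ≠ ⊥) :
    (¬ ∃ A B : Submodule F (Finset (Fin n) →₀ F),
        IsBnSub A ∧ IsBnSub B ∧ A ≠ ⊥ ∧ B ≠ ⊥ ∧ A ⊔ B = W ∧ A ⊓ B = ⊥) ↔
      ∃ k ≤ n, W ≤ VK F n k := by
  constructor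
  · intro hind
    by_contra hno
    push_neg at hno
    apply hind
    obtain ⟨v, hvW, hv0⟩ := Submodule.exists_mem_ne_zero_of_ne_bot hW0
    obtain ⟨S0, hS0⟩ := Finsupp.support_nonempty_iff.mpr hv0
    set k1 : ℕ := S0.card with hk1
    have hk1n : k1 ≤ n := card_le_n S0
    refine ⟨W ⊓ grSub n F (· = k1), W ⊓ grSub n F (· ≠ k1), ?_, ?_, ?_, ?_, ?_, ?_⟩
    · intro f hf u hu
      have hu' := Submodule.mem_inf.mp hu
      exact Submodule.mem_inf.mpr ⟨hW f hf u hu'.1, grSub_invariant hf.1 hu'.2⟩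
    · intro f hf u hu
      have hu' := Submodule.mem_inf.mp hu
      exact Submodule.mem_inf.mpr ⟨hW f hf u hu'.1, grSub_invariant hf.1 hu'.2⟩
    · rw [Submodule.ne_bot_iff]
      refine ⟨comp k1 v, Submodule.mem_inf.mpr
        ⟨comp_mem hW _ v hvW le_rfl k1, comp_mem_grSub k1 v _ rfl⟩, ?_⟩
      intro h
      have hz : comp k1 v S0 = 0 := by rw [h]; rfl
      rw [comp_apply, if_pos hk1.symm] at hz
      exact Finsupp.mem_support_iff.mp hS0 hz
    · have hnotle := hno k1 hk1n
      obtain ⟨u, huW, hunot⟩ := SetLike.not_le_iff_exists.mp hnotle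
      have hugr : u ∉ grSub n F (· = k1) := fun h => hunot (grSub_le_VK k1 h)
      rw [mem_grSub] at hugr
      push_neg at hugr
      obtain ⟨T, hT, hTne⟩ := hugr
      rw [Submodule.ne_bot_iff]
      refine ⟨comp T.card u, Submodule.mem_inf.mpr
        ⟨comp_mem hW _ u huW le_rfl _, comp_mem_grSub _ u _ hTne⟩, ?_⟩
      intro h
      have hz : comp T.card u T = 0 := by rw [h]; rfl
      rw [comp_apply, if_pos rfl] at hz
      exact Finsupp.mem_support_iff.mp hT hz
    · apply le_antisymm
      · exact sup_le inf_le_left inf_le_left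
      · intro u hu
        have h1 : comp k1 u ∈ W ⊓ grSub n F (· = k1) := Submodule.mem_inf.mpr
          ⟨comp_mem hW _ u hu le_rfl k1, comp_mem_grSub k1 u _ rfl⟩
        have h2 : u - comp k1 u ∈ W ⊓ grSub n F (· ≠ k1) := Submodule.mem_inf.mpr
          ⟨W.sub_mem hu (comp_mem hW _ u hu le_rfl k1),
            sub_comp_mem_grSub k1 u _ (fun j hj => hj)⟩
        have huq : u = comp k1 u + (u - comp k1 u) := by abel
        rw [huq]
        exact Submodule.add_mem_sup h1 h2
    · rw [eq_bot_iff]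
      intro u hu
      have h1 := (Submodule.mem_inf.mp (Submodule.mem_inf.mp hu).1).2
      have h2 := (Submodule.mem_inf.mp (Submodule.mem_inf.mp hu).2).2
      rw [Submodule.mem_bot]
      by_contra h0
      obtain ⟨S, hS⟩ := Finsupp.support_nonempty_iff.mpr h0
      exact h2 S hS (h1 S hS)
  · rintro ⟨k, hk, hWk⟩ ⟨A, B, hA, hB, hA0, hB0, hAB, hABbot⟩
    obtain ⟨a, haA, ha0⟩ := Submodule.exists_mem_ne_zero_of_ne_bot hA0
    obtain ⟨b, hbB, hb0⟩ := Submodule.exists_mem_ne_zero_of_ne_bot hB0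
    have haW : a ∈ W := by rw [← hAB]; exact Submodule.mem_sup_left haA
    have hbW : b ∈ W := by rw [← hAB]; exact Submodule.mem_sup_right hbB
    have h1 : Finsupp.single (boldK n k) (1 : F) ∈ A :=
      single_boldK_mem hA haA ha0 (VK_le_grSub k (hWk haW))
    have h2 : Finsupp.single (boldK n k) (1 : F) ∈ B :=
      single_boldK_mem hB hbB hb0 (VK_le_grSub k (hWk hbW))
    have hmem : Finsupp.single (boldK n k) (1 : F) ∈ A ⊓ B := Submodule.mem_inf.mpr ⟨h1, h2⟩
    rw [hABbot, Submodule.mem_bot] at hmem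
    exact one_ne_zero (Finsupp.single_eq_zero.mp hmem)
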